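/- Define $A_m(x;v) := \prod_{i=1}^n \frac{(q^{1-m} a\, \overline{v}_i^{-1}; q)_m}{(q t^{n-1} x_i; q)_m}$ for $v\in\mathbb{Z}^n$ and a tuple $x$ of variables, where $(y;q)_m=\prod_{j=0}^{m-1}(1-q^jy)$. Let $\widetilde{v} := \overline{-w_0 v}$, so that $\widetilde{v}_i = t^{1-n}\overline{v}_{n+1-i}^{-1}$. Then for all $u,v\in\mathbb{Z}^n$ and $m\in\mathbb{Z}_{\geq 0}$: $A_m(a\widetilde{v}; u)\cdot A_m(q^{-m} a \widetilde{u};\, v - (m,\ldots,m)) = 1$. -/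

import Mathlib

open Finset

/-- `k_i(v) = #{k<i : v_k ≥ v_i} + #{k>i : v_k > v_i}`. -/
def kwt {n : ℕ} (v : Fin n → ℤ) (i : Fin n) : ℕ :=
  ((univ : Finset (Fin n)).filter (fun k => k < i ∧ v i ≤ v k)).card +
  ((univ : Finset (Fin n)).filter (fun k => i < k ∧ v i < v k)).card

/-- `v̄_i = q^{v_i} t^{-k_i(v)}`. -/
noncomputable def vbar {F : Type} [Field F] (q t : F) {n : ℕ} (v : Fin n → ℤ)
    (i : Fin n) : F :=
  q ^ (v i) * t ^ (-(kwt v i : ℤ))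

/-- `ṽ = overline{-w₀v}`, where `w₀` reverses the entries. -/
noncomputable def vtilde {F : Type} [Field F] (q t : F) {n : ℕ} (v : Fin n → ℤ)
    (i : Fin n) : F :=
  vbar q t (fun j : Fin n => -(v ⟨n - 1 - (j : ℕ), by have := j.isLt; omega⟩)) i

/-- The `q`-shifted factorial `(y;q)_m = ∏_{j=0}^{m-1} (1 - qʲ y)`. -/
noncomputable def qPoch {F : Type} [Field F] (y q : F) (m : ℕ) : F :=
  ∏ j ∈ Finset.range m, (1 - q ^ j * y)

/-- `A_m(x;v) = ∏_{i=1}^n (q^{1-m} a v̄_i⁻¹;q)_m / (q t^{n-1} x_i;q)_m`. -/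
noncomputable def Am {F : Type} [Field F] (q t a : F) {n : ℕ} (m : ℕ)
    (x : Fin n → F) (v : Fin n → ℤ) : F :=
  ∏ i : Fin n,
    qPoch (q ^ ((1 : ℤ) - (m : ℤ)) * a * (vbar q t v i)⁻¹) q m /
      qPoch (q * t ^ ((n : ℤ) - 1) * x i) q m

/-- Reversal of `Fin n`. -/
def rev {n : ℕ} (i : Fin n) : Fin n := ⟨n - 1 - (i : ℕ), by have := i.isLt; omega⟩

lemma rev_rev {n : ℕ} (i : Fin n) : rev (rev i) = i := by
  have := i.isLt
  apply Fin.ext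
  simp [rev]
  omega

lemma vtilde_eq {F : Type} [Field F] (q t : F) {n : ℕ} (v : Fin n → ℤ) (i : Fin n) :
    vtilde q t v i = vbar q t (fun k => -(v (rev k))) i := rfl

lemma card_filter_rev {n : ℕ} (p : Fin n → Prop) [DecidablePred p] :
    (univ.filter p).card = (univ.filter (fun k => p (rev k))).card := by
  apply Finset.card_nbij' (i := rev) (j := rev)
  · intro a ha
    simp only [mem_coe, mem_filter, mem_univ, true_and] at ha ⊢
    rwa [rev_rev]
  · intro a ha
    simp only [mem_coe, mem_filter, mem_univ, true_and] at ha ⊢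
    exact ha
  · intro a _; exact rev_rev a
  · intro a _; exact rev_rev a

lemma kwt_add {n : ℕ} (v : Fin n → ℤ) (i : Fin n) :
    kwt (fun k => -(v (rev k))) i + kwt v (rev i) + 1 = n := by
  classical
  unfold kwt
  rw [card_filter_rev (fun k => k < i ∧ -(v (rev i)) ≤ -(v (rev k))),
      card_filter_rev (fun k => i < k ∧ -(v (rev i)) < -(v (rev k)))]
  simp only [rev_rev]
  simp only [Finset.card_filter]
  rw [← Finset.sum_add_distrib, ← Finset.sum_add_distrib, ← Finset.sum_add_distrib]
  have key : (∑ k : Fin n,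
      (((if rev k < i ∧ -(v (rev i)) ≤ -(v k) then 1 else 0) +
        (if i < rev k ∧ -(v (rev i)) < -(v k) then 1 else 0)) +
        ((if k < rev i ∧ v (rev i) ≤ v k then 1 else 0) +
        (if rev i < k ∧ v (rev i) < v k then 1 else 0))))
      + (∑ k : Fin n, if k = rev i then 1 else 0) = ∑ _k : Fin n, (1 : ℕ) := by
    rw [← Finset.sum_add_distrib]
    apply Finset.sum_congr rfl
    intro k _
    have hk := k.isLt; have hi := i.isLt
    simp only [rev, Fin.lt_def, Fin.ext_iff]
    split_ifs <;> omega
  simp only [Finset.sum_ite_eq', Finset.mem_univ, if_true, Finset.sum_const,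
    Finset.card_univ, Fintype.card_fin, smul_eq_mul, mul_one] at key
  omega

lemma kwt_sub {n : ℕ} (v : Fin n → ℤ) (m : ℤ) (i : Fin n) :
    kwt (fun j => v j - m) i = kwt v i := by
  unfold kwt
  congr 1
  · apply Finset.card_nbij' (i := id) (j := id) <;> intro a <;>
      simp_all [sub_le_sub_iff_right]
  · apply Finset.card_nbij' (i := id) (j := id) <;> intro a <;>
      simp_all [sub_lt_sub_iff_right]

lemma vbar_sub {F : Type} [Field F] (q t : F) (hq : q ≠ 0) {n : ℕ} (v : Fin n → ℤ)
    (m : ℕ) (i : Fin n) :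
    vbar q t (fun j => v j - (m:ℤ)) i = q ^ (-(m:ℤ)) * vbar q t v i := by
  unfold vbar
  rw [kwt_sub]
  beta_reduce
  rw [show v i - (m:ℤ) = -(m:ℤ) + v i by ring, zpow_add₀ hq]
  ring

lemma vbar_ne_zero {F : Type} [Field F] (q t : F) (hq : q ≠ 0) (ht : t ≠ 0)
    {n : ℕ} (v : Fin n → ℤ) (i : Fin n) : vbar q t v i ≠ 0 :=
  mul_ne_zero (zpow_ne_zero _ hq) (zpow_ne_zero _ ht)

lemma tilde_key {F : Type} [Field F] (q t : F) (ht : t ≠ 0) {n : ℕ}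
    (v : Fin n → ℤ) (i : Fin n) :
    t ^ ((n:ℤ) - 1) * vtilde q t v i = (vbar q t v (rev i))⁻¹ := by
  have hw := kwt_add v i
  have hexp : ((n:ℤ) - 1) + (-(kwt (fun k => -(v (rev k))) i : ℤ))
      = (kwt v (rev i) : ℤ) := by omega
  rw [vtilde_eq]
  unfold vbar
  beta_reduce
  rw [mul_inv, ← zpow_neg, ← zpow_neg, neg_neg]
  rw [← mul_assoc, mul_comm (t ^ ((n:ℤ)-1)) (q ^ (-(v (rev i)))), mul_assoc,
    ← zpow_add₀ ht, hexp]

/-- `A_m(aṽ;u) · A_m(q^{-m} a ũ; v - (m,…,m)) = 1`. -/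
theorem stmt15 {F : Type} [Field F] (q t a : F)
    (hq : q ≠ 0) (ht : t ≠ 0) (ha : a ≠ 0)
    {n : ℕ} (u v : Fin n → ℤ) (m : ℕ)
    (h1 : ∀ i : Fin n,
      qPoch (q * t ^ ((n : ℤ) - 1) * (a * vtilde q t v i)) q m ≠ 0)
    (h2 : ∀ i : Fin n,
      qPoch (q * t ^ ((n : ℤ) - 1) *
        (q ^ (-(m : ℤ)) * a * vtilde q t u i)) q m ≠ 0) :
    Am q t a m (fun i => a * vtilde q t v i) u *
      Am q t a m (fun i => q ^ (-(m : ℤ)) * a * vtilde q t u i)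
        (fun i => v i - m) = 1 := by
  classical
  have hrev : Function.Bijective (rev : Fin n → Fin n) :=
    Function.Involutive.bijective rev_rev
  set P : Fin n → F :=
    fun i => qPoch (q ^ ((1 : ℤ) - (m : ℤ)) * a * (vbar q t u i)⁻¹) q m with hP
  set Q : Fin n → F :=
    fun i => qPoch (q ^ ((1 : ℤ) - (m : ℤ)) * a *
      (vbar q t (fun j => v j - (m:ℤ)) i)⁻¹) q m with hQ
  -- argument identities
  have e1 : ∀ i : Fin n, q * t ^ ((n : ℤ) - 1) * (a * vtilde q t v i)
      = q ^ ((1 : ℤ) - (m : ℤ)) * a * (vbar q t (fun j => v j - (m:ℤ)) (rev i))⁻¹ := by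
    intro i
    rw [vbar_sub q t hq, mul_inv, ← zpow_neg, neg_neg,
      show q * t ^ ((n:ℤ)-1) * (a * vtilde q t v i)
        = q * a * (t ^ ((n:ℤ)-1) * vtilde q t v i) by ring,
      tilde_key q t ht, show ((1:ℤ) - (m:ℤ)) = 1 + (-(m:ℤ)) by ring,
      zpow_add₀ hq, zpow_one]
    have hqm : q ^ (-(m:ℤ)) * q ^ (m:ℤ) = 1 := by
      rw [← zpow_add₀ hq, neg_add_cancel, zpow_zero]
    rw [show q * q ^ (-(m:ℤ)) * a * (q ^ (m:ℤ) * (vbar q t v (rev i))⁻¹)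
        = (q ^ (-(m:ℤ)) * q ^ (m:ℤ)) * (q * a * (vbar q t v (rev i))⁻¹) by ring,
      hqm, one_mul]
  have e2 : ∀ i : Fin n, q * t ^ ((n : ℤ) - 1) * (q ^ (-(m : ℤ)) * a * vtilde q t u i)
      = q ^ ((1 : ℤ) - (m : ℤ)) * a * (vbar q t u (rev i))⁻¹ := by
    intro i
    rw [show q * t ^ ((n:ℤ)-1) * (q ^ (-(m:ℤ)) * a * vtilde q t u i)
        = q * q ^ (-(m:ℤ)) * a * (t ^ ((n:ℤ)-1) * vtilde q t u i) by ring,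
      tilde_key q t ht, show ((1:ℤ) - (m:ℤ)) = 1 + (-(m:ℤ)) by ring,
      zpow_add₀ hq, zpow_one]
  -- nonvanishing
  have hQne : ∀ i : Fin n, Q i ≠ 0 := by
    intro i
    have := h1 (rev i)
    rw [e1 (rev i), rev_rev] at this
    exact this
  have hPne : ∀ i : Fin n, P i ≠ 0 := by
    intro i
    have := h2 (rev i)
    rw [e2 (rev i), rev_rev] at this
    exact this
  -- rewrite the two products
  have hA1 : Am q t a m (fun i => a * vtilde q t v i) u
      = ∏ i : Fin n, P i / Q (rev i) := by
    unfold Am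
    apply Finset.prod_congr rfl
    intro i _
    rw [hP, hQ]
    beta_reduce
    rw [e1 i]
  have hA2 : Am q t a m (fun i => q ^ (-(m : ℤ)) * a * vtilde q t u i)
      (fun i => v i - m) = ∏ i : Fin n, Q i / P (rev i) := by
    unfold Am
    apply Finset.prod_congr rfl
    intro i _
    rw [hP, hQ]
    beta_reduce
    rw [e2 i]
  rw [hA1, hA2]
  have hre : (∏ i : Fin n, Q i / P (rev i)) = ∏ i : Fin n, Q (rev i) / P i :=
    (Fintype.prod_bijective rev hrev _ _ (fun x => by rw [rev_rev])).symm
  rw [hre, ← Finset.prod_mul_distrib]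
  apply Finset.prod_eq_one
  intro i _
  rw [div_mul_div_comm, mul_comm (P i) (Q (rev i)),
    div_self (mul_ne_zero (hQne (rev i)) (hPne i))]
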